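/- Let P_n(x) be the D'Arcais polynomials defined by P_0(x)=1 and P_n(x) = (x/n) Σ_{k=1}^{n} σ(k) P_{n-k}(x). For all real x ≥ 0 and n ≥ 1, P_n(x) ≥ (x/n) · L_{n-1}^{(1)}(−x), where L_{n}^{(α)} is the associated Laguerre polynomial. -/

import Mathlib

/-- Sum of divisors function. -/
def mysigma (n : ℕ) : ℕ := ∑ d ∈ n.divisors, d

/-- Partition function: number of partitions of `n`. -/
def partcount (n : ℕ) : ℕ := Fintype.card (Nat.Partition n)

/-- D'Arcais polynomials as real functions. -/
noncomputable def P : ℕ → ℝ → ℝ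
  | 0 => fun _ => 1
  | n + 1 => fun x => x / (n + 1) * ∑ k ∈ Finset.range (n + 1), (mysigma (k + 1) : ℝ) * P (n - k) x

/-- Number of k-colored partitions of n (each part in one of k colors),
counted via splitting into one ordinary partition per color. -/
def pcolored : ℕ → ℕ → ℕ
  | 0, n => if n = 0 then 1 else 0
  | k + 1, n => ∑ j ∈ Finset.range (n + 1), pcolored k j * partcount (n - j)

/-- Generalized (associated) Laguerre polynomial with nonnegative integer parameter α. -/
noncomputable def laguerre (α : ℕ) (n : ℕ) (x : ℝ) : ℝ :=
  ∑ k ∈ Finset.range (n + 1), (-1) ^ k * (Nat.choose (n + α) (n - k) : ℝ) * x ^ k / (Nat.factorial k : ℝ)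

noncomputable def A (n : ℕ) (x : ℝ) : ℝ :=
  if n = 0 then 1 else
    ∑ m ∈ Finset.range n, ((n - 1).choose m : ℝ) * x ^ (m + 1) / ((m + 1).factorial : ℝ)

lemma claim2 (N m : ℕ) :
    ∑ j ∈ Finset.range (N + 1), (N - j).choose m = (N + 1).choose (m + 1) := by
  induction N with
  | zero =>
    simp only [Finset.sum_range_one, Nat.zero_sub]
    cases m with
    | zero => rfl
    | succ m => simp [Nat.choose_eq_zero_of_lt]
  | succ N ih =>
    rw [Finset.sum_range_succ']
    simp only [Nat.succ_sub_succ]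
    rw [ih, Nat.sub_zero]
    rw [Nat.choose_succ_succ (N + 1) m]
    simp only [Nat.succ_eq_add_one]
    omega

lemma claim3 (N m : ℕ) :
    ∑ k ∈ Finset.range (N + 1), (k + 1) * (N - k).choose m = (N + 2).choose (m + 2) := by
  induction N with
  | zero =>
    simp only [Finset.sum_range_one, Nat.zero_sub, Nat.zero_add, one_mul]
    cases m with
    | zero => rfl
    | succ m => simp [Nat.choose_eq_zero_of_lt]
  | succ N ih =>
    rw [Finset.sum_range_succ']
    simp only [Nat.succ_sub_succ, Nat.sub_zero, one_mul]
    have h : ∀ k, (k + 1 + 1) * (N - k).choose m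
        = (k + 1) * (N - k).choose m + (N - k).choose m := by intro k; ring
    simp only [h, Finset.sum_add_distrib, ih, claim2 N m]
    have h1 := Nat.choose_succ_succ (N + 2) (m + 1)
    have h2 := Nat.choose_succ_succ (N + 1) m
    simp only [Nat.succ_eq_add_one] at h1 h2 ⊢
    have e1 : (N + 1 + 2).choose (m + 2) = (N + 2 + 1).choose (m + 1 + 1) := rfl
    have e2 : (N + 2).choose (m + 1 + 1) = (N + 2).choose (m + 2) := rfl
    have e3 : (N + 1 + 1).choose (m + 1) = (N + 2).choose (m + 1) := rfl
    omega

lemma A_zero (x : ℝ) : A 0 x = 1 := by simp [A]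

lemma A_pad (x : ℝ) {j N : ℕ} (hj : 1 ≤ j) (hjN : j ≤ N) :
    A j x = ∑ m ∈ Finset.range N,
      ((j - 1).choose m : ℝ) * x ^ (m + 1) / ((m + 1).factorial : ℝ) := by
  rw [A, if_neg (by omega)]
  apply Finset.sum_subset (Finset.range_subset_range.2 hjN)
  intro m _ hm
  have h : j - 1 < m := by simp only [Finset.mem_range, not_lt] at hm; omega
  rw [Nat.choose_eq_zero_of_lt h]
  simp

lemma A_nonneg (x : ℝ) (hx : 0 ≤ x) (n : ℕ) : 0 ≤ A n x := by
  rw [A]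
  split
  · norm_num
  · exact Finset.sum_nonneg fun m _ => by positivity

lemma A_rec (n : ℕ) (x : ℝ) :
    ((n : ℝ) + 2) * A (n + 2) x
      = x * ∑ k ∈ Finset.range (n + 2), ((k : ℝ) + 1) * A (n + 1 - k) x := by
  have hR : ∑ k ∈ Finset.range (n + 2), ((k : ℝ) + 1) * A (n + 1 - k) x
      = (∑ m ∈ Finset.range (n + 1),
          ((n + 2).choose (m + 2) : ℝ) * (x ^ (m + 1) / ((m + 1).factorial : ℝ)))
        + ((n : ℝ) + 2) := by
    rw [Finset.sum_range_succ]
    congr 1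
    · have hA : ∀ k ∈ Finset.range (n + 1),
          ((k : ℝ) + 1) * A (n + 1 - k) x
            = ∑ m ∈ Finset.range (n + 1),
                (((k : ℝ) + 1) * ((n - k).choose m : ℝ))
                  * (x ^ (m + 1) / ((m + 1).factorial : ℝ)) := by
        intro k hk
        rw [Finset.mem_range] at hk
        rw [A_pad x (by omega : 1 ≤ n + 1 - k) (by omega : n + 1 - k ≤ n + 1), Finset.mul_sum]
        apply Finset.sum_congr rfl
        intro m _
        have : n + 1 - k - 1 = n - k := by omega
        rw [this]
        ring
      rw [Finset.sum_congr rfl hA, Finset.sum_comm]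
      apply Finset.sum_congr rfl
      intro m _
      rw [← Finset.sum_mul]
      congr 1
      have h := claim3 n m
      calc ∑ k ∈ Finset.range (n + 1), ((k : ℝ) + 1) * ((n - k).choose m : ℝ)
          = ((∑ k ∈ Finset.range (n + 1), (k + 1) * (n - k).choose m : ℕ) : ℝ) := by
            push_cast; rfl
        _ = ((n + 2).choose (m + 2) : ℝ) := by rw [h]
    · rw [Nat.sub_self, A_zero]; push_cast; ring
  rw [hR]
  have hL : A (n + 2) x
      = (∑ m ∈ Finset.range (n + 1),
          ((n + 1).choose (m + 1) : ℝ) * x ^ (m + 2) / ((m + 2).factorial : ℝ)) + x := by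
    rw [A, if_neg (by omega)]
    rw [Finset.sum_range_succ']
    simp [Nat.factorial]
  rw [hL, mul_add, mul_add, Finset.mul_sum, Finset.mul_sum]
  have hterm : ∀ m ∈ Finset.range (n + 1),
      ((n : ℝ) + 2) * (((n + 1).choose (m + 1) : ℝ) * x ^ (m + 2) / ((m + 2).factorial : ℝ))
        = x * (((n + 2).choose (m + 2) : ℝ) * (x ^ (m + 1) / ((m + 1).factorial : ℝ))) := by
    intro m _
    have h := Nat.add_one_mul_choose_eq (n + 1) (m + 1)
    have h' : ((n : ℝ) + 2) * ((n + 1).choose (m + 1) : ℝ)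
        = ((n + 2).choose (m + 2) : ℝ) * ((m : ℝ) + 2) := by exact_mod_cast h
    have hf : ((m + 2).factorial : ℝ) = ((m : ℝ) + 2) * ((m + 1).factorial : ℝ) := by
      rw [show m + 2 = (m + 1) + 1 from rfl, Nat.factorial_succ]
      push_cast; ring
    have hfm : ((m + 1).factorial : ℝ) ≠ 0 := by positivity
    have hm2 : ((m : ℝ) + 2) ≠ 0 := by positivity
    rw [hf]
    field_simp
    linear_combination x ^ (m + 2) * h'
  rw [Finset.sum_congr rfl hterm]
  ring

lemma A_rec' (n : ℕ) (x : ℝ) :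
    A (n + 1) x = x / ((n : ℝ) + 1) * ∑ k ∈ Finset.range (n + 1), ((k : ℝ) + 1) * A (n - k) x := by
  cases n with
  | zero => simp [A, Nat.factorial]
  | succ n =>
    have h := A_rec n x
    have e1 : n + 2 = n + 1 + 1 := rfl
    rw [e1] at h
    push_cast
    rw [div_mul_eq_mul_div, eq_div_iff (by positivity : ((n : ℝ) + 1 + 1) ≠ 0)]
    linear_combination h

lemma sigma_ge (k : ℕ) : k + 1 ≤ mysigma (k + 1) := by
  unfold mysigma
  exact Finset.single_le_sum (f := fun d => d) (fun i _ => Nat.zero_le i)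
    (Nat.mem_divisors_self (k + 1) (by omega))

lemma A_le_P (x : ℝ) (hx : 0 ≤ x) : ∀ n, A n x ≤ P n x := by
  intro n
  induction n using Nat.strong_induction_on with
  | _ n ih =>
    match n with
    | 0 => simp [A_zero, P]
    | n + 1 =>
      simp only [P]
      rw [A_rec']
      apply mul_le_mul_of_nonneg_left _ (by positivity : (0 : ℝ) ≤ x / ((n : ℝ) + 1))
      apply Finset.sum_le_sum
      intro k hk
      have h1 : ((k : ℝ) + 1) ≤ (mysigma (k + 1) : ℝ) := by exact_mod_cast sigma_ge k
      exact mul_le_mul h1 (ih (n - k) (by omega)) (A_nonneg x hx _)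
        (le_trans (by positivity) h1)

lemma lag_eq (m : ℕ) (x : ℝ) :
    x / ((m : ℝ) + 1) * laguerre 1 m (-x) = A (m + 1) x := by
  rw [laguerre, A, if_neg (Nat.succ_ne_zero m), Finset.mul_sum]
  apply Finset.sum_congr rfl
  intro k hk
  rw [Finset.mem_range] at hk
  have hsymm : (m + 1).choose (m - k) = (m + 1).choose (k + 1) := by
    rw [← Nat.choose_symm (by omega : k + 1 ≤ m + 1)]
    congr 1
    omega
  have h := Nat.add_one_mul_choose_eq m k
  have h' : ((m : ℝ) + 1) * ((m).choose k : ℝ)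
      = ((m + 1).choose (k + 1) : ℝ) * ((k : ℝ) + 1) := by exact_mod_cast h
  have hneg : (-x) ^ k = (-1 : ℝ) ^ k * x ^ k := by rw [neg_pow]
  have hf : ((k + 1).factorial : ℝ) = ((k : ℝ) + 1) * (k.factorial : ℝ) := by
    rw [Nat.factorial_succ]; push_cast; ring
  have hm1 : ((m : ℝ) + 1) ≠ 0 := by positivity
  have hk1 : ((k : ℝ) + 1) ≠ 0 := by positivity
  have hkf : (k.factorial : ℝ) ≠ 0 := by positivity
  have hsq : ((-1 : ℝ)) ^ k * ((-1 : ℝ)) ^ k = 1 := by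
    rw [← pow_add]
    exact (neg_one_pow_eq_one_iff_even (by norm_num)).2 (Even.add_self k)
  have hclean : ((-1 : ℝ)) ^ k * (((m + 1).choose (k + 1) : ℝ)) * (-x) ^ k
      = (((m + 1).choose (k + 1) : ℝ)) * x ^ k := by
    rw [hneg, show ((-1 : ℝ)) ^ k * (((m + 1).choose (k + 1) : ℝ)) * (((-1 : ℝ)) ^ k * x ^ k)
        = (((-1 : ℝ)) ^ k * ((-1 : ℝ)) ^ k) * ((((m + 1).choose (k + 1) : ℝ)) * x ^ k) from by
        ring, hsq, one_mul]
  rw [hsymm, show m + 1 - 1 = m from rfl, hclean, hf]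
  field_simp
  linear_combination (-(x ^ (k + 1))) * h'

theorem darcais_ge_laguerre (x : ℝ) (hx : 0 ≤ x) (n : ℕ) (hn : 1 ≤ n) :
    P n x ≥ x / n * laguerre 1 (n - 1) (-x) := by
  match n, hn with
  | m + 1, _ =>
    have hcast : ((m + 1 : ℕ) : ℝ) = (m : ℝ) + 1 := by push_cast; ring
    rw [show m + 1 - 1 = m from rfl, hcast, lag_eq]
    exact A_le_P x hx (m + 1)
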